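/- Let D be a square-integrable real random variable with E[D] = 0, and let ξ > 0. Then E[exp(ξD − (ξ²/2)(D² + E[D²]))] ≤ 1. -/

import Mathlib

open MeasureTheory

/-- For a centered square-integrable random variable `D` and `ξ > 0`,
`E[exp(ξ D - (ξ²/2)(D² + E[D²]))] ≤ 1`. -/
theorem exp_moment_centered_le_one {Ω : Type*} [MeasurableSpace Ω]
    (μ : Measure Ω) [IsProbabilityMeasure μ] (D : Ω → ℝ)
    (hD2 : MemLp D 2 μ) (hDmean : ∫ ω, D ω ∂μ = 0) (ξ : ℝ) (hξ : 0 < ξ) :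
    ∫ ω, Real.exp (ξ * D ω - ξ ^ 2 / 2 * ((D ω) ^ 2 + ∫ ω', (D ω') ^ 2 ∂μ)) ∂μ ≤ 1 := by
  obtain ⟨g, hgsm, hgeq⟩ := hD2.aestronglyMeasurable
  have hgm : Measurable g := hgsm.measurable
  have hg2 : MemLp g 2 μ := hD2.ae_eq hgeq
  have hgmean : ∫ ω, g ω ∂μ = 0 := by
    rw [← hDmean]; exact (integral_congr_ae hgeq).symm
  have hsq_eq : ∫ ω', (D ω') ^ 2 ∂μ = ∫ ω', (g ω') ^ 2 ∂μ :=
    integral_congr_ae (hgeq.mono fun x hx => by simp only [hx])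
  set m : ℝ := ∫ ω', (g ω') ^ 2 ∂μ with hm
  have hgint : Integrable g μ := hg2.integrable one_le_two
  have hgsq : Integrable (fun ω => (g ω) ^ 2) μ := hg2.integrable_sq
  have hmnn : 0 ≤ m := integral_nonneg fun x => sq_nonneg _
  -- pointwise bound: ξ x - ξ²/2 x² ≤ 1/2
  have key : ∀ x : ℝ, ξ * x - ξ ^ 2 / 2 * x ^ 2 ≤ 1 / 2 := by
    intro x; nlinarith [sq_nonneg (ξ * x - 1)]
  -- the symmetrized function on the product
  set F : Ω × Ω → ℝ := fun z =>
    Real.exp (ξ * (g z.1 - g z.2) - ξ ^ 2 / 2 * (g z.1 - g z.2) ^ 2) with hF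
  have hFmeas : Measurable F := by
    apply Real.measurable_exp.comp
    exact (measurable_const.mul ((hgm.comp measurable_fst).sub (hgm.comp measurable_snd))).sub
      (measurable_const.mul
        (((hgm.comp measurable_fst).sub (hgm.comp measurable_snd)).pow measurable_const))
  have hFbdd : ∀ z, ‖F z‖ ≤ Real.exp (1/2) := by
    intro z
    rw [hF, Real.norm_eq_abs, abs_of_pos (Real.exp_pos _)]
    exact Real.exp_le_exp.2 (key _)
  have hFint : Integrable F (μ.prod μ) :=
    Integrable.mono' (integrable_const _) hFmeas.aestronglyMeasurable
      (Filter.Eventually.of_forall hFbdd)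
  -- the symmetrized integral is at most 1
  have hIle : ∫ z, F z ∂(μ.prod μ) ≤ 1 := by
    have hswap : ∫ z, F z.swap ∂(μ.prod μ) = ∫ z, F z ∂(μ.prod μ) :=
      integral_prod_swap F
    have hsum : ∀ z : Ω × Ω, F z + F z.swap ≤ 2 := by
      intro z
      have h1 : F z + F z.swap
          = 2 * Real.cosh (ξ * (g z.1 - g z.2)) *
            Real.exp (-((ξ * (g z.1 - g z.2)) ^ 2 / 2)) := by
        rw [hF]
        simp only [Prod.fst_swap, Prod.snd_swap]
        rw [Real.cosh_eq]
        rw [show ξ * (g z.2 - g z.1) - ξ ^ 2 / 2 * (g z.2 - g z.1) ^ 2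
            = -(ξ * (g z.1 - g z.2)) - (ξ * (g z.1 - g z.2)) ^ 2 / 2 by ring,
          show ξ * (g z.1 - g z.2) - ξ ^ 2 / 2 * (g z.1 - g z.2) ^ 2
            = (ξ * (g z.1 - g z.2)) - (ξ * (g z.1 - g z.2)) ^ 2 / 2 by ring]
        rw [Real.exp_sub, Real.exp_sub, Real.exp_neg, Real.exp_neg]
        field_simp
      rw [h1]
      set a := ξ * (g z.1 - g z.2)
      calc 2 * Real.cosh a * Real.exp (-(a ^ 2 / 2))
          ≤ 2 * Real.exp (a ^ 2 / 2) * Real.exp (-(a ^ 2 / 2)) := by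
            have := Real.cosh_le_exp_half_sq a
            nlinarith [Real.exp_pos (-(a ^ 2 / 2))]
        _ = 2 := by rw [mul_assoc, ← Real.exp_add]; simp
    have hFswapint : Integrable (fun z => F z.swap) (μ.prod μ) :=
      Integrable.mono' (integrable_const _) (hFmeas.comp measurable_swap).aestronglyMeasurable
        (Filter.Eventually.of_forall fun z => hFbdd z.swap)
    have h2 : ∫ z, (F z + F z.swap) ∂(μ.prod μ) ≤ ∫ _z, (2:ℝ) ∂(μ.prod μ) :=
      integral_mono (hFint.add hFswapint) (integrable_const _) hsum
    rw [integral_add hFint hFswapint, hswap, integral_const] at h2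
    simp only [measure_univ, probReal_univ, ENNReal.toReal_one, smul_eq_mul, one_mul] at h2
    linarith
  -- Jensen's inequality pointwise in ω
  have hjensen : ∀ ω, Real.exp (ξ * g ω - ξ ^ 2 / 2 * ((g ω) ^ 2 + m))
      ≤ ∫ ω', F (ω, ω') ∂μ := by
    intro ω
    set d := g ω
    set φ : Ω → ℝ := fun ω' => ξ * (d - g ω') - ξ ^ 2 / 2 * (d - g ω') ^ 2 with hφ
    have hφeq : φ = fun ω' =>
        (ξ * d - ξ ^ 2 / 2 * d ^ 2) + ((ξ ^ 2 * d - ξ) * g ω' + (-(ξ ^ 2 / 2)) * (g ω') ^ 2) := by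
      funext ω'; rw [hφ]; ring
    have hφint : Integrable φ μ := by
      rw [hφeq]
      exact (integrable_const _).add ((hgint.const_mul _).add (hgsq.const_mul _))
    have hφval : ∫ ω', φ ω' ∂μ = ξ * d - ξ ^ 2 / 2 * (d ^ 2 + m) := by
      have h1 : ∫ ω', φ ω' ∂μ
          = (∫ _ω', (ξ * d - ξ ^ 2 / 2 * d ^ 2) ∂μ)
            + ∫ ω', ((ξ ^ 2 * d - ξ) * g ω' + -(ξ ^ 2 / 2) * (g ω') ^ 2) ∂μ := by
        rw [hφeq]
        exact integral_add (integrable_const _) ((hgint.const_mul _).add (hgsq.const_mul _))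
      have h2 : ∫ ω', ((ξ ^ 2 * d - ξ) * g ω' + -(ξ ^ 2 / 2) * (g ω') ^ 2) ∂μ
          = (∫ ω', (ξ ^ 2 * d - ξ) * g ω' ∂μ) + ∫ ω', -(ξ ^ 2 / 2) * (g ω') ^ 2 ∂μ :=
        integral_add (hgint.const_mul _) (hgsq.const_mul _)
      rw [h1, h2, integral_const, integral_const_mul, integral_const_mul, hgmean, ← hm]
      simp only [measure_univ, probReal_univ, ENNReal.toReal_one, smul_eq_mul, one_mul, mul_zero]
      ring
    have hexpφint : Integrable (fun ω' => Real.exp (φ ω')) μ := by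
      apply Integrable.mono' (integrable_const (Real.exp (1/2)))
      · exact (Real.measurable_exp.comp
          ((measurable_const.mul (measurable_const.sub hgm)).sub
            (measurable_const.mul ((measurable_const.sub hgm).pow measurable_const)))).aestronglyMeasurable
      · refine Filter.Eventually.of_forall fun ω' => ?_
        rw [Real.norm_eq_abs, abs_of_pos (Real.exp_pos _)]
        exact Real.exp_le_exp.2 (key _)
    have := (convexOn_exp).map_integral_le (Real.continuous_exp.continuousOn) isClosed_univ
      (Filter.Eventually.of_forall fun x => Set.mem_univ (φ x)) hφint (by exact hexpφint)
    rw [hφval] at this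
    exact this
  -- put everything together
  have hLHSint : Integrable
      (fun ω => Real.exp (ξ * g ω - ξ ^ 2 / 2 * ((g ω) ^ 2 + m))) μ := by
    apply Integrable.mono' (integrable_const (Real.exp (1/2)))
    · exact (Real.measurable_exp.comp
        ((measurable_const.mul hgm).sub
          (measurable_const.mul ((hgm.pow measurable_const).add measurable_const)))).aestronglyMeasurable
    · refine Filter.Eventually.of_forall fun ω => ?_
      rw [Real.norm_eq_abs, abs_of_pos (Real.exp_pos _)]
      apply Real.exp_le_exp.2
      have := key (g ω)
      nlinarith [sq_nonneg ξ]
  have hRHSint : Integrable (fun ω => ∫ ω', F (ω, ω') ∂μ) μ := hFint.integral_prod_left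
  have hmono : ∫ ω, Real.exp (ξ * g ω - ξ ^ 2 / 2 * ((g ω) ^ 2 + m)) ∂μ
      ≤ ∫ ω, (∫ ω', F (ω, ω') ∂μ) ∂μ :=
    integral_mono hLHSint hRHSint hjensen
  have hfub : ∫ ω, (∫ ω', F (ω, ω') ∂μ) ∂μ = ∫ z, F z ∂(μ.prod μ) := by
    rw [MeasureTheory.integral_integral (f := fun ω ω' => F (ω, ω')) (by exact hFint)]
  have hDeq : ∫ ω, Real.exp (ξ * D ω - ξ ^ 2 / 2 * ((D ω) ^ 2 + ∫ ω', (D ω') ^ 2 ∂μ)) ∂μ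
      = ∫ ω, Real.exp (ξ * g ω - ξ ^ 2 / 2 * ((g ω) ^ 2 + m)) ∂μ := by
    rw [hsq_eq]
    exact integral_congr_ae (hgeq.mono fun x hx => by simp only [hx])
  rw [hDeq]
  calc ∫ ω, Real.exp (ξ * g ω - ξ ^ 2 / 2 * ((g ω) ^ 2 + m)) ∂μ
      ≤ ∫ ω, (∫ ω', F (ω, ω') ∂μ) ∂μ := hmono
    _ = ∫ z, F z ∂(μ.prod μ) := hfub
    _ ≤ 1 := hIle
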